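/- Let ℤ[μ] = ℤ[μ1, μ2, μ3, μ4, μ6] be a polynomial ring in five variables. Then there exists a unique formal power series s(u) ∈ ℤ[μ][[u]] with zero constant term satisfying the equation s = u³ + μ1·u·s + μ2·u²·s + μ3·s² + μ4·u·s² + μ6·s³. Moreover s(u) = u³ + μ1 u⁴ + (μ2 + μ1²)u⁵ + (μ3 + 2μ1μ2 + μ1³)u⁶ + … ; in particular the coefficients of u, u², u⁴, u⁵, u⁶ are 0, 0, μ1, μ2 + μ1², μ3 + 2μ1μ2 + μ1³ and the coefficient of u³ is 1. -/

import Mathlib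

noncomputable section

/-- The polynomial ring `ℤ[μ₁, μ₂, μ₃, μ₄, μ₆]`. -/
abbrev Rmu : Type := MvPolynomial (Fin 5) ℤ

def mu1 : Rmu := MvPolynomial.X 0
def mu2 : Rmu := MvPolynomial.X 1
def mu3 : Rmu := MvPolynomial.X 2
def mu4 : Rmu := MvPolynomial.X 3
def mu6 : Rmu := MvPolynomial.X 4

/-- The Tate equation `s = u³ + μ₁us + μ₂u²s + μ₃s² + μ₄us² + μ₆s³`. -/
def tateEq (s : PowerSeries Rmu) : Prop :=
  s = PowerSeries.X ^ 3 + PowerSeries.C mu1 * PowerSeries.X * s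
    + PowerSeries.C mu2 * PowerSeries.X ^ 2 * s + PowerSeries.C mu3 * s ^ 2
    + PowerSeries.C mu4 * PowerSeries.X * s ^ 2 + PowerSeries.C mu6 * s ^ 3

open PowerSeries

def F (s : PowerSeries Rmu) : PowerSeries Rmu :=
  PowerSeries.X ^ 3 + PowerSeries.C mu1 * PowerSeries.X * s
    + PowerSeries.C mu2 * PowerSeries.X ^ 2 * s + PowerSeries.C mu3 * s ^ 2
    + PowerSeries.C mu4 * PowerSeries.X * s ^ 2 + PowerSeries.C mu6 * s ^ 3

lemma mul_congr (n : ℕ) (a b c d : PowerSeries Rmu)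
    (ha : constantCoeff a = 0) (hb : constantCoeff b = 0)
    (hc : constantCoeff c = 0) (hd : constantCoeff d = 0)
    (hab : ∀ i < n, coeff i a = coeff i b)
    (hcd : ∀ i < n, coeff i c = coeff i d) :
    coeff n (a * c) = coeff n (b * d) := by
  rw [coeff_mul, coeff_mul]
  apply Finset.sum_congr rfl
  rintro ⟨i, j⟩ hij
  replace hij : i + j = n := Finset.HasAntidiagonal.mem_antidiagonal.mp hij
  rcases Nat.eq_zero_or_pos i with hi | hi
  · subst hi
    simp only [coeff_zero_eq_constantCoeff] at *
    rw [ha, hb, zero_mul, zero_mul]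
  rcases Nat.eq_zero_or_pos j with hj | hj
  · subst hj
    simp only [coeff_zero_eq_constantCoeff] at *
    rw [hc, hd, mul_zero, mul_zero]
  have hilt : i < n := by omega
  have hjlt : j < n := by omega
  simp only [hab i hilt, hcd j hjlt]

lemma F_const (s : PowerSeries Rmu) (h : constantCoeff s = 0) :
    constantCoeff (F s) = 0 := by
  simp [F, h, pow_succ]

lemma coeff_F_congr (n : ℕ) (a b : PowerSeries Rmu)
    (ha : constantCoeff a = 0) (hb : constantCoeff b = 0)
    (h : ∀ i < n, coeff i a = coeff i b) :
    coeff n (F a) = coeff n (F b) := by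
  have hXc : ∀ c : Rmu, constantCoeff (PowerSeries.C c * PowerSeries.X) = 0 := by
    intro c; simp
  have hCa : ∀ c : Rmu, constantCoeff (PowerSeries.C c * a) = c * constantCoeff a := by
    intro c; simp
  have key2 : ∀ c : Rmu, ∀ m, (∀ i < m, coeff i a = coeff i b) →
      coeff m (PowerSeries.C c * a * a) = coeff m (PowerSeries.C c * b * b) := by
    intro c m hm
    apply mul_congr <;> try simp [ha, hb]
    · intro i hi; simp [hm i hi]
    · exact hm
  have key3 : ∀ c : Rmu, ∀ m, (∀ i < m, coeff i a = coeff i b) →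
      coeff m (PowerSeries.C c * a * a * a) = coeff m (PowerSeries.C c * b * b * b) := by
    intro c m hm
    apply mul_congr <;> try simp [ha, hb]
    · intro i hi; exact key2 c i (fun j hj => hm j (hj.trans hi))
    · exact hm
  have keyX : ∀ c : Rmu, ∀ m, (∀ i < m, coeff i a = coeff i b) →
      coeff m (PowerSeries.C c * PowerSeries.X * a) = coeff m (PowerSeries.C c * PowerSeries.X * b) := by
    intro c m hm
    apply mul_congr <;> try simp [ha, hb]
    exact hm
  have keyX2 : ∀ c : Rmu, ∀ m, (∀ i < m, coeff i a = coeff i b) →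
      coeff m (PowerSeries.C c * PowerSeries.X ^ 2 * a) = coeff m (PowerSeries.C c * PowerSeries.X ^ 2 * b) := by
    intro c m hm
    apply mul_congr <;> try simp [ha, hb, pow_succ]
    exact hm
  have keyX4 : ∀ c : Rmu, ∀ m, (∀ i < m, coeff i a = coeff i b) →
      coeff m (PowerSeries.C c * PowerSeries.X * a ^ 2) = coeff m (PowerSeries.C c * PowerSeries.X * b ^ 2) := by
    intro c m hm
    rw [sq, sq, ← mul_assoc, ← mul_assoc]
    apply mul_congr <;> try simp [ha, hb]
    · intro i hi; exact keyX c i (fun j hj => hm j (hj.trans hi))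
    · exact hm
  simp only [F, map_add]
  rw [show PowerSeries.C mu3 * a ^ 2 = PowerSeries.C mu3 * a * a by ring,
      show PowerSeries.C mu3 * b ^ 2 = PowerSeries.C mu3 * b * b by ring,
      show PowerSeries.C mu6 * a ^ 3 = PowerSeries.C mu6 * a * a * a by ring,
      show PowerSeries.C mu6 * b ^ 3 = PowerSeries.C mu6 * b * b * b by ring]
  rw [keyX mu1 n h, keyX2 mu2 n h, key2 mu3 n h, keyX4 mu4 n h, key3 mu6 n h]


lemma Fiter_const (a : PowerSeries Rmu) (ha : constantCoeff a = 0) :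
    ∀ n : ℕ, constantCoeff (F^[n] a) = 0 := by
  intro n
  induction n with
  | zero => exact ha
  | succ n ih => rw [Function.iterate_succ_apply']; exact F_const _ ih

lemma iter_congr : ∀ n : ℕ, ∀ a b : PowerSeries Rmu, constantCoeff a = 0 →
    constantCoeff b = 0 → ∀ i < n, coeff i (F^[n] a) = coeff i (F^[n] b) := by
  intro n
  induction n with
  | zero => intro a b _ _ i hi; omega
  | succ n ih =>
    intro a b ha hb i hi
    rw [Function.iterate_succ_apply', Function.iterate_succ_apply']
    exact coeff_F_congr i _ _ (Fiter_const a ha n) (Fiter_const b hb n)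
      (fun j hj => ih a b ha hb j (by omega))

def sSol : PowerSeries Rmu := PowerSeries.mk fun n => coeff n (F^[n + 1] 0)

lemma coeff_sSol (n m : ℕ) (h : n < m) :
    coeff n sSol = coeff n (F^[m] 0) := by
  have h1 : coeff n sSol = coeff n (F^[n + 1] 0) := PowerSeries.coeff_mk _ _
  rw [h1]
  obtain ⟨k, rfl⟩ : ∃ k, m = (n + 1) + k := ⟨m - (n + 1), by omega⟩
  conv_rhs => rw [Function.iterate_add_apply]
  exact iter_congr (n + 1) 0 (F^[k] 0) (by simp) (Fiter_const 0 (by simp) k) n (by omega)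

lemma sSol_const : constantCoeff sSol = 0 := by
  rw [← PowerSeries.coeff_zero_eq_constantCoeff_apply, coeff_sSol 0 1 (by omega)]
  simpa using Fiter_const 0 (by simp) 1

lemma sSol_fixed : sSol = F sSol := by
  apply PowerSeries.ext
  intro n
  rw [coeff_sSol n (n + 1) (by omega), Function.iterate_succ_apply']
  exact coeff_F_congr n _ _ (Fiter_const 0 (by simp) n) sSol_const
    (fun j hj => (coeff_sSol j n hj).symm)


set_option maxHeartbeats 2000000 in
lemma coeffs16 (s : PowerSeries Rmu) (h0 : constantCoeff s = 0) (hfix : s = F s) :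
      PowerSeries.coeff 1 s = 0 ∧
      PowerSeries.coeff 2 s = 0 ∧
      PowerSeries.coeff 3 s = 1 ∧
      PowerSeries.coeff 4 s = mu1 ∧
      PowerSeries.coeff 5 s = mu2 + mu1 ^ 2 ∧
      PowerSeries.coeff 6 s = mu3 + 2 * mu1 * mu2 + mu1 ^ 3 := by
  have c1 : coeff 1 s = 0 := by
    conv_lhs => rw [hfix]
    simp [F, PowerSeries.coeff_mul, Finset.Nat.sum_antidiagonal_eq_sum_range_succ_mk,
      Finset.sum_range_succ, PowerSeries.coeff_X_pow, PowerSeries.coeff_X, pow_succ, pow_zero, one_mul, h0,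
      PowerSeries.coeff_zero_eq_constantCoeff]
  have c2 : coeff 2 s = 0 := by
    conv_lhs => rw [hfix]
    simp [F, PowerSeries.coeff_mul, Finset.Nat.sum_antidiagonal_eq_sum_range_succ_mk,
      Finset.sum_range_succ, PowerSeries.coeff_X_pow, PowerSeries.coeff_X, pow_succ, pow_zero, one_mul, h0, c1,
      PowerSeries.coeff_zero_eq_constantCoeff]
  have c3 : coeff 3 s = 1 := by
    conv_lhs => rw [hfix]
    simp [F, PowerSeries.coeff_mul, Finset.Nat.sum_antidiagonal_eq_sum_range_succ_mk,
      Finset.sum_range_succ, PowerSeries.coeff_X_pow, PowerSeries.coeff_X, pow_succ, pow_zero, one_mul, h0, c1, c2,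
      PowerSeries.coeff_zero_eq_constantCoeff]
  have c4 : coeff 4 s = mu1 := by
    conv_lhs => rw [hfix]
    simp [F, PowerSeries.coeff_mul, Finset.Nat.sum_antidiagonal_eq_sum_range_succ_mk,
      Finset.sum_range_succ, PowerSeries.coeff_X_pow, PowerSeries.coeff_X, pow_succ, pow_zero, one_mul, h0, c1, c2, c3,
      PowerSeries.coeff_zero_eq_constantCoeff]
  have c5 : coeff 5 s = mu2 + mu1 ^ 2 := by
    conv_lhs => rw [hfix]
    simp [F, PowerSeries.coeff_mul, Finset.Nat.sum_antidiagonal_eq_sum_range_succ_mk,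
      Finset.sum_range_succ, PowerSeries.coeff_X_pow, PowerSeries.coeff_X, pow_succ, pow_zero, one_mul, h0, c1, c2, c3,
      c4, PowerSeries.coeff_zero_eq_constantCoeff]
    ring
  have c6 : coeff 6 s = mu3 + 2 * mu1 * mu2 + mu1 ^ 3 := by
    conv_lhs => rw [hfix]
    simp [F, PowerSeries.coeff_mul, Finset.Nat.sum_antidiagonal_eq_sum_range_succ_mk,
      Finset.sum_range_succ, PowerSeries.coeff_X_pow, PowerSeries.coeff_X, pow_succ, pow_zero, one_mul, h0, c1, c2, c3,
      c4, c5, PowerSeries.coeff_zero_eq_constantCoeff]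
    ring
  exact ⟨c1, c2, c3, c4, c5, c6⟩

open PowerSeries in
lemma tateEq_iff_fixed (s : PowerSeries Rmu) : tateEq s ↔ s = F s := Iff.rfl

open PowerSeries in
lemma fixed_unique (s t : PowerSeries Rmu) (hs0 : constantCoeff s = 0)
    (ht0 : constantCoeff t = 0) (hs : s = F s) (ht : t = F t) : s = t := by
  apply PowerSeries.ext
  intro n
  induction n using Nat.strong_induction_on with
  | _ n ih =>
    calc coeff n s = coeff n (F s) := by conv_lhs => rw [hs]
    _ = coeff n (F t) := coeff_F_congr n s t hs0 ht0 ih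
    _ = coeff n t := by conv_rhs => rw [ht]

/-- There is a unique power series `s(u)` with zero constant term satisfying the Tate
equation, and its coefficients at `u, u², u³, u⁴, u⁵, u⁶` are
`0, 0, 1, μ₁, μ₂ + μ₁², μ₃ + 2μ₁μ₂ + μ₁³`. -/
theorem statement14 :
    (∃! s : PowerSeries Rmu, PowerSeries.constantCoeff s = 0 ∧ tateEq s) ∧
    ∀ s : PowerSeries Rmu, PowerSeries.constantCoeff s = 0 → tateEq s →
      PowerSeries.coeff 1 s = 0 ∧
      PowerSeries.coeff 2 s = 0 ∧
      PowerSeries.coeff 3 s = 1 ∧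
      PowerSeries.coeff 4 s = mu1 ∧
      PowerSeries.coeff 5 s = mu2 + mu1 ^ 2 ∧
      PowerSeries.coeff 6 s = mu3 + 2 * mu1 * mu2 + mu1 ^ 3 := by
  constructor
  · exact ⟨sSol, ⟨sSol_const, (tateEq_iff_fixed sSol).mpr sSol_fixed⟩,
      fun t ⟨ht0, htE⟩ => fixed_unique t sSol ht0 sSol_const ((tateEq_iff_fixed t).mp htE) sSol_fixed⟩
  · exact fun s h0 hE => coeffs16 s h0 ((tateEq_iff_fixed s).mp hE)


end
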